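/- Let D be a division ring that is a k-algebra over a commutative field k. If D ⊗_k D^op is left noetherian, then D does not contain an infinite strictly ascending chain D₁ ⊊ D₂ ⊊ D₃ ⊊ ⋯ of division subrings that are k-subalgebras. -/

import Mathlib

open scoped TensorProduct
open MulOpposite

section Aux
variable {k D : Type*} [Field k] [DivisionRing D] [Algebra k D]

/-- The killing functional: given a subfield `S` and `s ∈ D`, a projection-based
`k`-linear functional on `D ⊗ Dᵐᵒᵖ` vanishing on the left ideal generated by
`t ⊗ 1 - 1 ⊗ op t`, `t ∈ S`, but not on `s ⊗ 1 - 1 ⊗ op s` when `s ∉ S`. -/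
theorem key_not_mem (S : Subfield D) (hk : ∀ a : k, algebraMap k D a ∈ S)
    (s : D) (hs : s ∉ S) :
    (s ⊗ₜ[k] (1 : Dᵐᵒᵖ) - (1 : D) ⊗ₜ[k] op s) ∉
      Submodule.span (D ⊗[k] Dᵐᵒᵖ)
        {x | ∃ t ∈ S, x = t ⊗ₜ[k] (1 : Dᵐᵒᵖ) - (1 : D) ⊗ₜ[k] op t} := by
  -- the span of {1} over S
  set p : Submodule S D := Submodule.span S {(1 : D)} with hp
  obtain ⟨q, hq⟩ := Submodule.exists_isCompl p
  set c : D →ₗ[S] D := p.subtype.comp (Submodule.projectionOnto p q hq) with hc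
  have hc1 : c 1 = 1 := by
    simp only [hc, LinearMap.comp_apply, Submodule.subtype_apply]
    rw [Submodule.linearProjOfIsCompl_apply_left hq ⟨1, Submodule.mem_span_singleton_self 1⟩]
  have hcmem : ∀ x : D, c x ∈ S := by
    intro x
    have : c x ∈ p := (Submodule.projectionOnto p q hq x).2
    rw [hp, Submodule.mem_span_singleton] at this
    obtain ⟨t, ht⟩ := this
    exact ht ▸ (show t • (1:D) ∈ S from S.mul_mem t.2 S.one_mem)
  have hcS : ∀ (t : D), t ∈ S → ∀ y : D, c (t * y) = t * c y := by
    intro t ht y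
    exact c.map_smul (⟨t, ht⟩ : S) y
  -- k-linearity of c
  have hck : ∀ (a : k) (y : D), c (a • y) = a • c y := by
    intro a y
    rw [Algebra.smul_def, hcS _ (hk a), ← Algebra.smul_def]
  -- build ψ
  set B : D →ₗ[k] Dᵐᵒᵖ →ₗ[k] D :=
    { toFun := fun x =>
        { toFun := fun oy => x * c oy.unop
          map_add' := by intro y z; simp [mul_add]
          map_smul' := by
            intro a y
            simp only [unop_smul, hck, RingHom.id_apply, Algebra.mul_smul_comm] }
      map_add' := by intro x y; ext oy; simp [add_mul]
      map_smul' := by intro a x; ext oy; simp [Algebra.smul_mul_assoc] } with hB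
  set ψ : D ⊗[k] Dᵐᵒᵖ →ₗ[k] D := TensorProduct.lift B with hψ
  have hψt : ∀ (x : D) (oy : Dᵐᵒᵖ), ψ (x ⊗ₜ oy) = x * c oy.unop := by
    intro x oy; rfl
  -- ψ kills the ideal: strengthened induction
  have hkill : ∀ z ∈ Submodule.span (D ⊗[k] Dᵐᵒᵖ)
      {x | ∃ t ∈ S, x = t ⊗ₜ[k] (1 : Dᵐᵒᵖ) - (1 : D) ⊗ₜ[k] op t},
      ∀ b : D ⊗[k] Dᵐᵒᵖ, ψ (b * z) = 0 := by
    intro z hz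
    refine Submodule.span_induction ?_ ?_ ?_ ?_ hz
    · rintro x ⟨t, ht, rfl⟩ b
      induction b using TensorProduct.induction_on with
      | zero => simp
      | tmul u v =>
        rw [mul_sub, Algebra.TensorProduct.tmul_mul_tmul,
          Algebra.TensorProduct.tmul_mul_tmul]
        rw [map_sub, hψt, hψt]
        simp only [mul_one, one_mul]
        have : (v * op t).unop = t * v.unop := rfl
        rw [this, hcS _ ht, mul_assoc, sub_self]
      | add u v hu hv => rw [add_mul, map_add, hu, hv, add_zero]
    · intro b; simp
    · intro x y _ _ hx hy b; rw [mul_add, map_add, hx, hy, add_zero]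
    · intro a x _ hx b
      rw [smul_eq_mul, ← mul_assoc]
      exact hx (b * a)
  intro hmem
  have := hkill _ hmem 1
  rw [one_mul, map_sub, hψt, hψt] at this
  simp only [unop_one, hc1, mul_one, unop_op, one_mul] at this
  have : s = c s := by rwa [sub_eq_zero] at this
  exact hs (this ▸ hcmem s)

end Aux

/-- **Sweedler's lemma.** Let `D` be a division ring which is a
`k`-algebra over a commutative field `k`.  If `D ⊗_k D^op` is left noetherian, then `D`
contains no infinite strictly ascending chain of division subrings which are
`k`-subalgebras. -/
theorem no_ascending_chain_of_division_subalgebras (k D : Type*) [Field k]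
    [DivisionRing D] [Algebra k D]
    (h : IsNoetherianRing (D ⊗[k] Dᵐᵒᵖ)) :
    ¬ ∃ S : ℕ → Subfield D,
        (∀ n : ℕ, ∀ a : k, algebraMap k D a ∈ S n) ∧ StrictMono S := by
  rintro ⟨S, hS1, hS2⟩
  set J : ℕ → Submodule (D ⊗[k] Dᵐᵒᵖ) (D ⊗[k] Dᵐᵒᵖ) := fun n =>
    Submodule.span (D ⊗[k] Dᵐᵒᵖ)
      {x | ∃ t ∈ S n, x = t ⊗ₜ[k] (1 : Dᵐᵒᵖ) - (1 : D) ⊗ₜ[k] MulOpposite.op t} with hJ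
  have hmono : Monotone J := by
    intro m n hmn
    refine Submodule.span_mono ?_
    rintro x ⟨t, ht, hx⟩
    exact ⟨t, hS2.monotone hmn ht, hx⟩
  have hstrict : ∀ n, J n < J (n + 1) := by
    intro n
    obtain ⟨s, hsn1, hsn⟩ := SetLike.exists_of_lt (hS2 (lt_add_one n))
    refine lt_of_le_of_ne (hmono (Nat.le_succ n)) ?_
    intro heq
    have hgen : (s ⊗ₜ[k] (1 : Dᵐᵒᵖ) - (1 : D) ⊗ₜ[k] MulOpposite.op s) ∈ J (n + 1) :=
      Submodule.subset_span ⟨s, hsn1, rfl⟩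
    rw [← heq] at hgen
    exact key_not_mem (S n) (hS1 n) s hsn hgen
  obtain ⟨n, hn⟩ := monotone_stabilizes_iff_noetherian.mpr h ⟨J, hmono⟩
  exact (hstrict n).ne (hn (n + 1) (Nat.le_succ n))
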